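/- arXiv:1212.2817 — 4 statements merged into one kernel-verified Lean document; each statement's English description precedes it below -/
import Mathlib

section
/- Let X be a real separable infinite-dimensional Banach space, let (f_i)_{i=1}^∞ be a sequence of norm-one continuous linear functionals on X, and let (α_i)_{i=1}^∞ be a sequence in the open interval (0,1) converging to 0. Define the slices S_i = {x ∈ X : ‖x‖ ≤ 1 and f_i(x) ≥ α_i} of the closed unit ball. Then the sequence (S_i) is not point-finite: there exists a point x with ‖x‖ ≤ 1 belonging to S_i for infinitely many i. -/
open Metric Set Filter

/-- If `(f_i)` are norm-one continuous linear functionals on a separable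
infinite-dimensional real Banach space `X` and `(α_i) ⊆ (0,1)` converges to `0`, then
the sequence of slices `S_i = {x ∈ B_X : f_i(x) ≥ α_i}` of the closed unit ball is not
point-finite: some point of the closed unit ball belongs to infinitely many slices. -/
theorem slices_not_pointFinite
    (X : Type*) [NormedAddCommGroup X] [NormedSpace ℝ X] [CompleteSpace X]
    [TopologicalSpace.SeparableSpace X] (hinf : ¬ FiniteDimensional ℝ X)
    (f : ℕ → X →L[ℝ] ℝ) (hf : ∀ i, ‖f i‖ = 1)
    (α : ℕ → ℝ) (hα : ∀ i, α i ∈ Set.Ioo (0 : ℝ) 1)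
    (hα0 : Tendsto α atTop (nhds 0)) :
    ∃ x : X, ‖x‖ ≤ 1 ∧ {i | ‖x‖ ≤ 1 ∧ α i ≤ f i x}.Infinite := by
  by_cases h : ∃ x : X, ‖x‖ ≤ 1 ∧ ∃ c > (0:ℝ), {i | c ≤ f i x}.Infinite
  · obtain ⟨x, hx, c, hc, hi⟩ := h
    refine ⟨x, hx, ?_⟩
    have hev : ∀ᶠ i in atTop, α i < c := hα0.eventually_lt_const hc
    have hfin : {i | ¬ α i < c}.Finite := by
      rw [← Nat.cofinite_eq_atTop] at hev
      exact Filter.eventually_cofinite.mp hev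
    refine (hi.diff hfin).mono ?_
    rintro i ⟨hi1, hi2⟩
    exact ⟨hx, le_trans (le_of_lt (not_not.mp hi2)) hi1⟩
  · push_neg at h
    -- every pointwise value sequence dies off: f i y → 0 for all y in the ball
    have hfin : ∀ y : X, ‖y‖ ≤ 1 → ∀ c : ℝ, 0 < c → {i | c ≤ f i y}.Finite :=
      fun y hy c hc => h y hy c hc
    have hptw : ∀ y : X, ‖y‖ ≤ 1 → ∀ c : ℝ, 0 < c → ∀ᶠ i in atTop, |f i y| ≤ c := by
      intro y hy c hc
      have h1 : {i | c ≤ f i y}.Finite := hfin y hy c hc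
      have h2 : {i | c ≤ f i (-y)}.Finite := hfin (-y) (by simpa using hy) c hc
      rw [← Nat.cofinite_eq_atTop]
      have : {i | ¬ |f i y| ≤ c}.Finite := by
        refine ((h1.union h2).subset ?_)
        intro i hi
        simp only [Set.mem_setOf_eq, not_le] at hi
        rcases lt_abs.mp hi with hi | hi
        · exact Or.inl (Set.mem_setOf_eq ▸ hi.le)
        · refine Or.inr ?_
          simp only [Set.mem_setOf_eq, map_neg]
          linarith
      exact Filter.eventually_cofinite.mpr this
    -- choose witnesses z i in the ball with f i (z i) ≥ 1/2
    have hz : ∀ i, ∃ y : X, ‖y‖ ≤ 1 ∧ (1:ℝ)/2 ≤ f i y := by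
      intro i
      have h12 : (1:ℝ)/2 < ‖f i‖ := by rw [hf i]; norm_num
      obtain ⟨y, hy1, hy2⟩ := (f i).exists_lt_apply_of_lt_opNorm h12
      rcases le_or_gt 0 (f i y) with hy0 | hy0
      · exact ⟨y, hy1.le, by rw [Real.norm_eq_abs, abs_of_nonneg hy0] at hy2; linarith⟩
      · refine ⟨-y, by simpa using hy1.le, ?_⟩
        rw [Real.norm_eq_abs, abs_of_neg hy0] at hy2
        simp only [map_neg]
        linarith
    choose z hz1 hz2 using hz
    -- the coefficients
    set cc : ℕ → ℝ := fun k => (1/5:ℝ)^(k+1) with hcc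
    have hccpos : ∀ k, 0 < cc k := fun k => by positivity
    have hccsum : Summable cc := by
      have : Summable (fun k : ℕ => (1/5:ℝ)^k) :=
        summable_geometric_of_lt_one (by norm_num) (by norm_num)
      rw [hcc]
      simp only [pow_succ]
      exact this.mul_right _
    have hcctsum : ∑' k, cc k = 1/4 := by
      have : ∑' k : ℕ, (1/5:ℝ)^k = (1 - 1/5)⁻¹ :=
        tsum_geometric_of_lt_one (by norm_num) (by norm_num)
      calc ∑' k, cc k = ∑' k : ℕ, (1/5:ℝ)^k * (1/5) := by
            rw [hcc]; simp only [pow_succ]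
        _ = (∑' k : ℕ, (1/5:ℝ)^k) * (1/5) := tsum_mul_right
        _ = (1 - 1/5:ℝ)⁻¹ * (1/5) := by rw [this]
        _ = 1/4 := by norm_num
    have hcctail : ∀ k, ∑' j, cc (j + (k+1)) = cc k / 4 := by
      intro k
      have hg : ∑' j : ℕ, (1/5:ℝ)^j = (1 - 1/5)⁻¹ :=
        tsum_geometric_of_lt_one (by norm_num) (by norm_num)
      calc ∑' j, cc (j + (k+1))
          = ∑' j : ℕ, (1/5:ℝ)^j * (1/5)^(k+2) := by
            apply tsum_congr; intro j
            rw [hcc, ← pow_add]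
            ring_nf
        _ = (∑' j : ℕ, (1/5:ℝ)^j) * (1/5)^(k+2) := tsum_mul_right
        _ = (1 - 1/5:ℝ)⁻¹ * (1/5)^(k+2) := by rw [hg]
        _ = cc k / 4 := by rw [hcc]; ring
    -- the eventual condition for choosing the next index
    have hP : ∀ l : List ℕ, ∃ i : ℕ, (∀ j ∈ l, j < i) ∧ α i ≤ cc l.length / 8 ∧
        ∀ j ∈ l, |f i (z j)| ≤ cc l.length / 2 := by
      intro l
      have e1 : ∀ᶠ i in atTop, α i ≤ cc l.length / 8 :=
        hα0.eventually_le_const (by positivity)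
      have e2 : ∀ᶠ i in atTop, ∀ j ∈ l.toFinset, |f i (z j)| ≤ cc l.length / 2 := by
        rw [Filter.eventually_all_finset]
        intro j _
        exact hptw (z j) (hz1 j) _ (by positivity)
      have e3 : ∀ᶠ i in atTop, ∀ j ∈ l.toFinset, j < i := by
        rw [Filter.eventually_all_finset]
        intro j _
        exact eventually_gt_atTop j
      obtain ⟨i, hi3, hi1, hi2⟩ := (e3.and (e1.and e2)).exists
      exact ⟨i, fun j hj => hi3 j (List.mem_toFinset.mpr hj), hi1,
        fun j hj => hi2 j (List.mem_toFinset.mpr hj)⟩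
    set F : List ℕ → ℕ := fun l => (hP l).choose with hF
    have hFspec : ∀ l, (∀ j ∈ l, j < F l) ∧ α (F l) ≤ cc l.length / 8 ∧
        ∀ j ∈ l, |f (F l) (z j)| ≤ cc l.length / 2 := fun l => (hP l).choose_spec
    set hist : ℕ → List ℕ := fun k => Nat.rec ([] : List ℕ) (fun _ ih => ih ++ [F ih]) k
      with hhist
    have histsucc : ∀ k, hist (k+1) = hist k ++ [F (hist k)] := fun k => rfl
    set n : ℕ → ℕ := fun k => F (hist k) with hn
    have hlen : ∀ k, (hist k).length = k := by
      intro k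
      induction k with
      | zero => rfl
      | succ k ih => rw [histsucc, List.length_append, ih]; rfl
    have hmem : ∀ k m, m < k → n m ∈ hist k := by
      intro k
      induction k with
      | zero => intro m hm; omega
      | succ k ih =>
        intro m hm
        rw [histsucc, List.mem_append]
        rcases Nat.lt_succ_iff_lt_or_eq.mp hm with hm | hm
        · exact Or.inl (ih m hm)
        · exact Or.inr (by rw [hm]; exact List.mem_singleton.mpr rfl)
    have hmono : ∀ m k, m < k → n m < n k := by
      intro m k hmk
      exact (hFspec (hist k)).1 (n m) (hmem k m hmk)
    -- the point
    set w : ℕ → X := fun j => cc j • z (n j) with hw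
    have hwnorm : ∀ j, ‖w j‖ ≤ cc j := by
      intro j
      rw [hw]
      calc ‖cc j • z (n j)‖ = |cc j| * ‖z (n j)‖ := by rw [norm_smul, Real.norm_eq_abs]
        _ ≤ cc j * 1 := by
            rw [abs_of_pos (hccpos j)]
            exact mul_le_mul_of_nonneg_left (hz1 (n j)) (hccpos j).le
        _ = cc j := mul_one _
    have hws : Summable w := Summable.of_norm_bounded hccsum hwnorm
    set x : X := ∑' j, w j with hx
    have hxnorm : ‖x‖ ≤ 1 := by
      have hsn : Summable (fun j => ‖w j‖) :=
        Summable.of_nonneg_of_le (fun j => norm_nonneg _) hwnorm hccsum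
      calc ‖x‖ ≤ ∑' j, ‖w j‖ := norm_tsum_le_tsum_norm hsn
        _ ≤ ∑' j, cc j := Summable.tsum_le_tsum hwnorm hsn hccsum
        _ = 1/4 := hcctsum
        _ ≤ 1 := by norm_num
    -- the key estimate
    have hkey : ∀ k, α (n k) ≤ f (n k) x := by
      intro k
      set g : ℕ → ℝ := fun j => cc j * f (n k) (z (n j)) with hg
      have hgb : ∀ j, |g j| ≤ cc j := by
        intro j
        rw [hg, abs_mul, abs_of_pos (hccpos j)]
        calc cc j * |f (n k) (z (n j))| ≤ cc j * 1 := by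
              refine mul_le_mul_of_nonneg_left ?_ (hccpos j).le
              calc |f (n k) (z (n j))| ≤ ‖f (n k)‖ * ‖z (n j)‖ := (f (n k)).le_opNorm _
                _ ≤ 1 * 1 := by
                    rw [hf]
                    exact mul_le_mul_of_nonneg_left (hz1 _) zero_le_one
                _ = 1 := one_mul 1
          _ = cc j := mul_one _
      have hgs : Summable g := by
        refine Summable.of_norm_bounded hccsum ?_
        intro j; rw [Real.norm_eq_abs]; exact hgb j
      have hfx : f (n k) x = ∑' j, g j := by
        rw [hx, ContinuousLinearMap.map_tsum _ hws]
        apply tsum_congr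
        intro j
        rw [hw, hg, map_smul, smul_eq_mul]
      -- split at k+1
      have hsplit : (∑ j ∈ Finset.range (k+1), g j) + ∑' j, g (j + (k+1)) = ∑' j, g j :=
        Summable.sum_add_tsum_nat_add (k+1) hgs
      -- bound for j < k
      have hA : |∑ j ∈ Finset.range k, g j| ≤ cc k / 8 := by
        calc |∑ j ∈ Finset.range k, g j| ≤ ∑ j ∈ Finset.range k, |g j| :=
              Finset.abs_sum_le_sum_abs _ _
          _ ≤ ∑ j ∈ Finset.range k, cc j * (cc k / 2) := by
              refine Finset.sum_le_sum ?_
              intro j hj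
              have hjk : j < k := Finset.mem_range.mp hj
              have hb := (hFspec (hist k)).2.2 (n j) (hmem k j hjk)
              rw [hlen] at hb
              rw [hg, abs_mul, abs_of_pos (hccpos j)]
              exact mul_le_mul_of_nonneg_left hb (hccpos j).le
          _ = (∑ j ∈ Finset.range k, cc j) * (cc k / 2) := by
              rw [← Finset.sum_mul]
          _ ≤ (1/4) * (cc k / 2) := by
              refine mul_le_mul_of_nonneg_right ?_ (by positivity)
              calc ∑ j ∈ Finset.range k, cc j ≤ ∑' j, cc j :=
                    Summable.sum_le_tsum _ (fun j _ => (hccpos j).le) hccsum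
                _ = 1/4 := hcctsum
          _ = cc k / 8 := by ring
      -- the main term
      have hB : cc k / 2 ≤ g k := by
        rw [hg]
        have := hz2 (n k)
        calc cc k / 2 = cc k * (1/2) := by ring
          _ ≤ cc k * f (n k) (z (n k)) :=
              mul_le_mul_of_nonneg_left this (hccpos k).le
      -- the tail
      have hC : |∑' j, g (j + (k+1))| ≤ cc k / 4 := by
        have hgs' : Summable (fun j => g (j + (k+1))) :=
          (summable_nat_add_iff (k+1)).mpr hgs
        have hcc' : Summable (fun j => cc (j + (k+1))) :=
          (summable_nat_add_iff (k+1)).mpr hccsum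
        have hgn : Summable (fun j => ‖g (j + (k+1))‖) := by
          simp only [Real.norm_eq_abs]
          exact Summable.of_nonneg_of_le (fun j => abs_nonneg _)
            (fun j => hgb (j + (k+1))) hcc'
        calc |∑' j, g (j + (k+1))| ≤ ∑' j, ‖g (j + (k+1))‖ := by
              rw [← Real.norm_eq_abs]
              exact norm_tsum_le_tsum_norm hgn
          _ ≤ ∑' j, cc (j + (k+1)) := by
              refine Summable.tsum_le_tsum ?_ hgn hcc'
              intro j; rw [Real.norm_eq_abs]; exact hgb _
          _ = cc k / 4 := hcctail k
      have hαk : α (n k) ≤ cc k / 8 := by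
        have := (hFspec (hist k)).2.1
        rwa [hlen] at this
      have hsum : ∑ j ∈ Finset.range (k+1), g j =
          (∑ j ∈ Finset.range k, g j) + g k := Finset.sum_range_succ g k
      have habs1 : -(cc k / 8) ≤ ∑ j ∈ Finset.range k, g j := neg_le_of_abs_le hA
      have habs2 : -(cc k / 4) ≤ ∑' j, g (j + (k+1)) := neg_le_of_abs_le hC
      rw [hfx, ← hsplit, hsum]
      have : cc k / 8 ≤ (∑ j ∈ Finset.range k, g j) + g k + ∑' j, g (j + (k+1)) := by
        linarith
      linarith
    refine ⟨x, hxnorm, ?_⟩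
    have hninj : Function.Injective n := by
      intro a b hab
      by_contra hne
      rcases lt_or_gt_of_ne hne with h' | h'
      · exact absurd hab (Nat.ne_of_lt (hmono a b h'))
      · exact absurd hab.symm (Nat.ne_of_lt (hmono b a h'))
    exact Set.infinite_of_injective_forall_mem hninj (fun k => ⟨hxnorm, hkey k⟩)
end

section
/- Let X be a uniformly smooth real Banach space. For every ε > 0 there exists b > 0 such that: for every R > b, every x ∈ X with ‖x‖ = R, and every norm-one continuous linear functional f on X with f(x) = R, one has R − f(y) ≤ ε for all y ∈ X with ‖y‖ = R and ‖y − x‖ ≤ 2. (Equivalently, the distance from y to the hyperplane {t : f(t) = R} supporting the ball of radius R at x is at most ε.) -/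
open Metric Set Filter

/-- A real normed space is *uniformly smooth* (its norm is uniformly Fréchet
differentiable on the unit sphere), expressed via the modulus of smoothness:
for every `ε > 0` there is `δ > 0` such that
`‖x + y‖ + ‖x - y‖ ≤ 2 + ε * ‖y‖` whenever `‖x‖ = 1` and `‖y‖ ≤ δ`. -/
def UniformlySmooth (X : Type*) [NormedAddCommGroup X] [NormedSpace ℝ X] : Prop :=
  ∀ ε > 0, ∃ δ > 0, ∀ x y : X, ‖x‖ = 1 → ‖y‖ ≤ δ → ‖x + y‖ + ‖x - y‖ ≤ 2 + ε * ‖y‖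

/-- In a uniformly smooth space, any point of a sphere of sufficiently large radius `R`
admits "almost flat" neighborhoods of diameter `2`: for every `ε > 0` there is `b > 0`
such that for `R > b`, `x` on the sphere of radius `R`, and `f` a norm-one functional
supporting the ball of radius `R` at `x` (i.e. `f x = R`), every point `y` of the sphere
with `‖y - x‖ ≤ 2` lies within distance `ε` of the supporting hyperplane
`{t : f t = R}`, i.e. `R - f y ≤ ε`. -/
theorem almost_flat_neighborhoods
    (X : Type*) [NormedAddCommGroup X] [NormedSpace ℝ X]
    (hsmooth : UniformlySmooth X) :
    ∀ ε > 0, ∃ b > 0, ∀ R > b, ∀ x : X, ‖x‖ = R →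
      ∀ f : X →L[ℝ] ℝ, ‖f‖ = 1 → f x = R →
        ∀ y : X, ‖y‖ = R → ‖y - x‖ ≤ 2 → R - f y ≤ ε := by
  intro ε hε
  obtain ⟨δ, hδ, hsm⟩ := hsmooth (ε / 2) (by linarith)
  refine ⟨2 / δ, by positivity, ?_⟩
  intro R hR x hx f hf hfx y hy hyx
  have hRpos : (0 : ℝ) < R := lt_trans (by positivity) hR
  set u : X := R⁻¹ • x with hu
  set v : X := R⁻¹ • (y - x) with hv
  have hunorm : ‖u‖ = 1 := by
    rw [hu, norm_smul, hx, norm_inv, Real.norm_of_nonneg hRpos.le]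
    field_simp
  have hvnorm : ‖v‖ = ‖y - x‖ / R := by
    rw [hv, norm_smul, norm_inv, Real.norm_of_nonneg hRpos.le]; ring
  have hvδ : ‖v‖ ≤ δ := by
    rw [hvnorm]
    have h2R : 2 / R ≤ δ := by
      rw [div_le_iff₀ hRpos]
      rw [gt_iff_lt, div_lt_iff₀ hδ] at hR
      linarith
    calc ‖y - x‖ / R ≤ 2 / R := by gcongr
    _ ≤ δ := h2R
  have key := hsm u v hunorm hvδ
  have huv : u + v = R⁻¹ • y := by rw [hu, hv, ← smul_add]; congr 1; abel
  have huvnorm : ‖u + v‖ = 1 := by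
    rw [huv, norm_smul, hy, norm_inv, Real.norm_of_nonneg hRpos.le]
    field_simp
  have h1 : ‖u - v‖ ≤ 1 + ε / 2 * ‖v‖ := by rw [huvnorm] at key; linarith
  have hfuv : f (u - v) ≤ ‖u - v‖ := by
    calc f (u - v) ≤ ‖f (u - v)‖ := le_abs_self _
    _ ≤ ‖f‖ * ‖u - v‖ := f.le_opNorm _
    _ = ‖u - v‖ := by rw [hf, one_mul]
  have hfval : f (u - v) = (2 * R - f y) / R := by
    rw [map_sub, hu, hv, map_smul, map_smul, map_sub, smul_eq_mul, smul_eq_mul, hfx]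
    field_simp
    ring
  have hvle : ‖v‖ ≤ 2 / R := by rw [hvnorm]; gcongr
  have : (2 * R - f y) / R ≤ 1 + ε / 2 * (2 / R) := by
    rw [← hfval]
    calc f (u - v) ≤ ‖u - v‖ := hfuv
    _ ≤ 1 + ε / 2 * ‖v‖ := h1
    _ ≤ 1 + ε / 2 * (2 / R) := by gcongr
  rw [div_le_iff₀ hRpos] at this
  have hε2 : ε / 2 * (2 / R) * R = ε := by field_simp
  nlinarith
end

section
/- Let X be a separable infinite-dimensional uniformly smooth real Banach space and let ℬ = {B(x_n, R_n)}_{n=1}^∞ be a countable collection of closed balls in X such that R_n → ∞ as n → ∞. If ℬ is not locally finite (i.e., some point of X is singular for ℬ), then ℬ is not point-finite (i.e., some point of X belongs to infinitely many of the balls B(x_n, R_n)). -/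
open Metric Set Filter Topology

set_option synthInstance.maxHeartbeats 1000000
set_option maxHeartbeats 4000000

section Aux

variable {X : Type*} [NormedAddCommGroup X] [NormedSpace ℝ X]

theorem aux_smooth_scaled (hs : UniformlySmooth X) {ε : ℝ} (hε : 0 < ε) :
    ∃ δ > 0, ∀ x y : X, x ≠ 0 → ‖y‖ ≤ δ * ‖x‖ →
      ‖x + y‖ + ‖x - y‖ ≤ 2 * ‖x‖ + ε * ‖y‖ := by
  obtain ⟨δ, hδ, H⟩ := hs ε hε
  refine ⟨δ, hδ, fun x y hx hy => ?_⟩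
  have hc : (0:ℝ) < ‖x‖ := norm_pos_iff.2 hx
  have h1 : ‖(‖x‖⁻¹ • x : X)‖ = 1 := by
    rw [norm_smul, norm_inv, norm_norm]
    field_simp
  have h2 : ‖(‖x‖⁻¹ • y : X)‖ ≤ δ := by
    rw [norm_smul, norm_inv, norm_norm]
    rw [inv_mul_le_iff₀ hc]
    linarith [hy]
  have := H _ _ h1 h2
  have e1 : ‖x‖⁻¹ • x + ‖x‖⁻¹ • y = ‖x‖⁻¹ • (x + y) := by rw [smul_add]
  have e2 : ‖x‖⁻¹ • x - ‖x‖⁻¹ • y = ‖x‖⁻¹ • (x - y) := by rw [smul_sub]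
  rw [e1, e2, norm_smul, norm_smul, norm_smul, norm_inv, norm_norm] at this
  have := mul_le_mul_of_nonneg_left this hc.le
  rw [mul_add, mul_add] at this
  have hxx : ‖x‖ * (‖x‖⁻¹ * ‖x + y‖) = ‖x + y‖ := by field_simp
  have hxy : ‖x‖ * (‖x‖⁻¹ * ‖x - y‖) = ‖x - y‖ := by field_simp
  have hyy : ‖x‖ * (ε * (‖x‖⁻¹ * ‖y‖)) = ε * ‖y‖ := by field_simp
  rw [hxx, hxy, hyy] at this
  linarith

theorem aux_ulim_real (U : Ultrafilter ℕ) {u : ℕ → ℝ} {C : ℝ} (h : ∀ n, |u n| ≤ C) :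
    ∃ l, |l| ≤ C ∧ Tendsto u U (𝓝 l) := by
  have hmem : (U.map u : Filter ℝ) ≤ 𝓟 (Icc (-C) C) := by
    rw [le_principal_iff]
    rw [Ultrafilter.coe_map, mem_map]
    have : u ⁻¹' Icc (-C) C = univ := by
      ext n; simp only [mem_preimage, mem_Icc, mem_univ, iff_true]
      exact abs_le.1 (h n)
    rw [this]; exact univ_mem
  obtain ⟨l, hl, hl2⟩ := isCompact_Icc.ultrafilter_le_nhds (U.map u) hmem
  refine ⟨l, abs_le.2 ⟨hl.1, hl.2⟩, ?_⟩
  rwa [Ultrafilter.coe_map] at hl2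

theorem aux_ulim_dual (U : Ultrafilter ℕ) (T : ℕ → X →L[ℝ] ℝ) {C : ℝ} (hC0 : 0 ≤ C)
    (hC : ∀ n, ‖T n‖ ≤ C) :
    ∃ F : X →L[ℝ] ℝ, ‖F‖ ≤ C ∧ ∀ w, Tendsto (fun n => T n w) U (𝓝 (F w)) := by
  have key : ∀ w : X, ∃ l, |l| ≤ C * ‖w‖ ∧ Tendsto (fun n => T n w) U (𝓝 l) := by
    intro w
    refine aux_ulim_real U (fun n => ?_)
    calc |T n w| ≤ ‖T n‖ * ‖w‖ := (T n).le_opNorm w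
    _ ≤ C * ‖w‖ := by gcongr; exact hC n
  choose φ hφ1 hφ2 using key
  have hadd : ∀ w w', φ (w + w') = φ w + φ w' := by
    intro w w'
    refine tendsto_nhds_unique ?_ ((hφ2 w).add (hφ2 w'))
    have : (fun n => T n (w + w')) = fun n => T n w + T n w' := by
      ext n; exact (T n).map_add w w'
    rw [← this]; exact hφ2 (w + w')
  have hsmul : ∀ (c : ℝ) w, φ (c • w) = c * φ w := by
    intro c w
    refine tendsto_nhds_unique ?_ ((hφ2 w).const_mul c)
    have : (fun n => T n (c • w)) = fun n => c * T n w := by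
      ext n; simp [(T n).map_smul]
    rw [← this]; exact hφ2 (c • w)
  let F : X →ₗ[ℝ] ℝ :=
    { toFun := φ, map_add' := hadd, map_smul' := hsmul }
  refine ⟨LinearMap.mkContinuous F C (fun w => ?_), ?_, ?_⟩
  · have : ‖φ w‖ ≤ C * ‖w‖ := by
      rw [Real.norm_eq_abs]; exact hφ1 w
    exact this
  · exact LinearMap.mkContinuous_norm_le F hC0 _
  · exact hφ2

theorem aux_ulim_findim {E : Type*} [NormedAddCommGroup E] [NormedSpace ℝ E]
    (U : Ultrafilter ℕ) (V : Submodule ℝ E) [FiniteDimensional ℝ V]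
    (h : ℕ → E) (hmem : ∀ n, h n ∈ V) {C : ℝ} (hC : ∀ n, ‖h n‖ ≤ C) :
    ∃ l ∈ V, Tendsto h U (𝓝 l) := by
  haveI : ProperSpace V := FiniteDimensional.proper ℝ V
  set hv : ℕ → V := fun n => ⟨h n, hmem n⟩ with hhv
  have hmem2 : (U.map hv : Filter V) ≤ 𝓟 (closedBall (0 : V) C) := by
    rw [le_principal_iff, Ultrafilter.coe_map, mem_map]
    have : hv ⁻¹' closedBall (0 : V) C = univ := by
      ext n
      simp only [mem_preimage, mem_closedBall_zero_iff, mem_univ, iff_true]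
      exact hC n
    rw [this]; exact univ_mem
  obtain ⟨a, _, ha2⟩ := (isCompact_closedBall (0 : V) C).ultrafilter_le_nhds (U.map hv) hmem2
  rw [Ultrafilter.coe_map] at ha2
  refine ⟨(a : E), a.2, ?_⟩
  exact (continuous_subtype_val.tendsto a).comp ha2

theorem aux_clm_mem_span {m : ℕ} (ψ : Fin m → X →L[ℝ] ℝ) (φ : X →L[ℝ] ℝ)
    (h : ∀ z : X, (∀ i, ψ i z = 0) → φ z = 0) :
    φ ∈ Submodule.span ℝ (Set.range ψ) := by
  have hker : ⨅ i, LinearMap.ker ((ψ i : X →ₗ[ℝ] ℝ)) ≤ LinearMap.ker (φ : X →ₗ[ℝ] ℝ) := by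
    intro z hz
    rw [Submodule.mem_iInf] at hz
    exact LinearMap.mem_ker.2 (h z (fun i => LinearMap.mem_ker.1 (hz i)))
  have hsp := mem_span_of_iInf_ker_le_ker hker
  rw [Submodule.mem_span_range_iff_exists_fun] at hsp
  obtain ⟨c, hc⟩ := hsp
  have : φ = ∑ i, c i • ψ i := by
    ext w
    have := congrArg (fun (L : X →ₗ[ℝ] ℝ) => L w) hc
    simpa using this.symm
  rw [this]
  exact Submodule.sum_mem _ fun i _ =>
    Submodule.smul_mem _ _ (Submodule.subset_span ⟨i, rfl⟩)

/-- Restriction-norm lower bound along an ultrafilter. -/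
theorem aux_claimA (U : Ultrafilter ℕ) (g : ℕ → X →L[ℝ] ℝ) {C : ℝ} (hC0 : 0 ≤ C)
    (hbd : ∀ n, ‖g n‖ ≤ C)
    (hw0 : ∀ w : X, Tendsto (fun n => g n w) U (𝓝 0))
    {s : ℝ} (hs : Tendsto (fun n => ‖g n‖) U (𝓝 s))
    {m : ℕ} (ψ : Fin m → X →L[ℝ] ℝ)
    (Y : Submodule ℝ X) (hY : ∀ z : X, z ∈ Y ↔ (∀ i, ψ i z = 0)) :
    ∃ t, s ≤ 2 * t ∧ Tendsto (fun n => ‖(g n).comp Y.subtypeL‖) U (𝓝 t) := by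
  set u : ℕ → ℝ := fun n => ‖(g n).comp Y.subtypeL‖ with hu
  have hu0 : ∀ n, 0 ≤ u n := fun n => by
    simp only [hu]; exact norm_nonneg ((g n).comp Y.subtypeL)
  have hule : ∀ n, u n ≤ ‖g n‖ := by
    intro n
    simp only [hu]
    refine ContinuousLinearMap.opNorm_le_bound _ (norm_nonneg _) (fun z => ?_)
    calc ‖(g n) (Y.subtypeL z)‖ ≤ ‖g n‖ * ‖(z : X)‖ := (g n).le_opNorm _
    _ = ‖g n‖ * ‖z‖ := rfl
  obtain ⟨t, _, ht⟩ := aux_ulim_real U (u := u) (C := C)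
    (fun n => by rw [abs_of_nonneg (hu0 n)]; exact (hule n).trans (hbd n))
  have ht0 : 0 ≤ t := le_of_tendsto_of_tendsto' tendsto_const_nhds ht hu0
  refine ⟨t, ?_, ht⟩
  have hG := fun n => exists_extension_norm_eq Y ((g n).comp Y.subtypeL)
  choose G hG1 hG2 using hG
  set h : ℕ → X →L[ℝ] ℝ := fun n => g n - G n with hh
  have hvanish : ∀ n, ∀ z : X, (∀ i, ψ i z = 0) → h n z = 0 := by
    intro n z hz
    have hzY : z ∈ Y := (hY z).2 hz
    have := hG1 n ⟨z, hzY⟩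
    simp only [ContinuousLinearMap.comp_apply, Submodule.subtypeL_apply] at this
    simp [hh, this]
  have hhmem : ∀ n, h n ∈ Submodule.span ℝ (Set.range ψ) :=
    fun n => aux_clm_mem_span ψ (h n) (hvanish n)
  haveI : FiniteDimensional ℝ (Submodule.span ℝ (Set.range ψ)) :=
    FiniteDimensional.span_of_finite ℝ (Set.finite_range ψ)
  have hhbd : ∀ n, ‖h n‖ ≤ 2 * C := by
    intro n
    calc ‖g n - G n‖ ≤ ‖g n‖ + ‖G n‖ := norm_sub_le _ _
    _ ≤ C + C := by
        refine add_le_add (hbd n) ?_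
        rw [hG2 n]; exact (hule n).trans (hbd n)
    _ = 2 * C := by ring
  obtain ⟨l, _, hl⟩ := aux_ulim_findim U _ h hhmem hhbd
  have hGw : ∀ w : X, Tendsto (fun n => G n w) U (𝓝 (-(l w))) := by
    intro w
    have h1 : Tendsto (fun n => h n w) U (𝓝 (l w)) := by
      have hcont : Continuous fun (T : X →L[ℝ] ℝ) => T w :=
        (ContinuousLinearMap.apply ℝ ℝ w).continuous
      exact (hcont.tendsto l).comp hl
    have h2 : (fun n => G n w) = fun n => g n w - h n w := by
      ext n; simp [hh]
    rw [h2]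
    have := (hw0 w).sub h1
    simpa using this
  have hlnorm : ‖l‖ ≤ t := by
    refine ContinuousLinearMap.opNorm_le_bound _ ht0 (fun w => ?_)
    have hGwle : ∀ n, ‖G n w‖ ≤ u n * ‖w‖ := by
      intro n
      calc ‖G n w‖ ≤ ‖G n‖ * ‖w‖ := (G n).le_opNorm w
      _ = u n * ‖w‖ := by rw [hG2 n]
    have h1 : Tendsto (fun n => ‖G n w‖) U (𝓝 ‖-(l w)‖) := (hGw w).norm
    have h2 : Tendsto (fun n => u n * ‖w‖) U (𝓝 (t * ‖w‖)) := ht.mul_const _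
    have := le_of_tendsto_of_tendsto' h1 h2 hGwle
    simpa using this
  have hgle : ∀ n, ‖g n‖ ≤ ‖h n‖ + u n := by
    intro n
    calc ‖g n‖ = ‖h n + G n‖ := by congr 1; simp [hh]
    _ ≤ ‖h n‖ + ‖G n‖ := norm_add_le _ _
    _ = ‖h n‖ + u n := by rw [hG2 n]
  have h1 : Tendsto (fun n => ‖h n‖ + u n) U (𝓝 (‖l‖ + t)) := (hl.norm).add ht
  have := le_of_tendsto_of_tendsto' hs h1 hgle
  linarith

theorem aux_exists_unit_lt {E : Type*} [NormedAddCommGroup E] [NormedSpace ℝ E]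
    (T : E →L[ℝ] ℝ) {c : ℝ} (hc : 0 ≤ c) (h : c < ‖T‖) : ∃ z : E, ‖z‖ ≤ 1 ∧ c < T z := by
  by_contra h'
  push_neg at h'
  have : ‖T‖ ≤ c := by
    refine ContinuousLinearMap.opNorm_le_bound _ hc (fun z => ?_)
    rcases eq_or_ne z 0 with rfl | hz
    · simp [hc]
    · have hzn : (0:ℝ) < ‖z‖ := norm_pos_iff.2 hz
      have h1 : ‖(‖z‖⁻¹ • z : E)‖ ≤ 1 := by
        rw [norm_smul, norm_inv, norm_norm]; field_simp; exact le_rfl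
      have h2 := h' _ h1
      have h3 := h' _ (by rwa [norm_neg] : ‖-(‖z‖⁻¹ • z : E)‖ ≤ 1)
      rw [map_neg] at h3
      have habs : |T (‖z‖⁻¹ • z)| ≤ c := abs_le.2 ⟨by linarith, h2⟩
      have heq : T (‖z‖⁻¹ • z) = ‖z‖⁻¹ * T z := by rw [map_smul]; rfl
      rw [heq, abs_mul, abs_inv, abs_norm] at habs
      rw [Real.norm_eq_abs]
      calc |T z| = ‖z‖ * (‖z‖⁻¹ * |T z|) := by field_simp
      _ ≤ ‖z‖ * c := by gcongr
      _ = c * ‖z‖ := mul_comm _ _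
  linarith

theorem aux_listU {α : Type*} (U : Ultrafilter ℕ) (L : List α) (P : α → ℕ → Prop)
    (h : ∀ a ∈ L, {n | P a n} ∈ U) : {n | ∀ a ∈ L, P a n} ∈ U := by
  induction L with
  | nil => exact univ_mem' (by simp)
  | cons b L ih =>
    have h1 : {n | P b n} ∈ U := h b List.mem_cons_self
    have h2 : {n | ∀ a ∈ L, P a n} ∈ U := ih (fun a ha => h a (List.mem_cons_of_mem b ha))
    filter_upwards [h1, h2] with n hn1 hn2
    intro a ha
    rcases List.mem_cons.1 ha with rfl | ha
    · exact hn1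
    · exact hn2 a ha

theorem aux_buildU (d : ℕ → ℝ) (hinfset : ∀ r > (0:ℝ), {n | d n ≤ r}.Infinite) :
    ∃ U : Ultrafilter ℕ, (∀ s ∈ Filter.atTop, s ∈ U) ∧ (∀ r > (0:ℝ), {n | d n ≤ r} ∈ U) := by
  set G : Filter ℕ := ⨅ r : {r : ℝ // 0 < r}, 𝓟 {n | d n ≤ r.1} with hG
  set F : Filter ℕ := Filter.atTop ⊓ G with hF
  haveI : Nonempty {r : ℝ // 0 < r} := ⟨⟨1, one_pos⟩⟩
  have hdir : Directed (· ≥ ·) (fun r : {r : ℝ // 0 < r} => 𝓟 {n | d n ≤ r.1}) := by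
    intro r1 r2
    refine ⟨⟨min r1.1 r2.1, lt_min r1.2 r2.2⟩, ?_, ?_⟩ <;>
      · refine principal_mono.2 (fun n hn => ?_)
        simp only [mem_setOf_eq] at hn ⊢
        simp only [le_min_iff] at hn
        first | exact hn.1 | exact hn.2
  haveI : NeBot F := by
    rw [← forall_mem_nonempty_iff_neBot]
    intro s hs
    rw [hF, mem_inf_iff] at hs
    obtain ⟨t₁, ht₁, t₂, ht₂, rfl⟩ := hs
    rw [hG, mem_iInf_of_directed hdir] at ht₂
    obtain ⟨⟨r, hr⟩, ht₂⟩ := ht₂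
    rw [mem_principal] at ht₂
    rw [mem_atTop_sets] at ht₁
    obtain ⟨N, hN⟩ := ht₁
    have hinf2 : ({n | d n ≤ r} \ Iio N).Infinite :=
      (hinfset r hr).diff (finite_Iio N)
    obtain ⟨n, hn⟩ := hinf2.nonempty
    exact ⟨n, hN n (not_lt.1 hn.2), ht₂ hn.1⟩
  refine ⟨Ultrafilter.of F, ?_, ?_⟩
  · intro s hs
    have h1 : F ≤ Filter.atTop := inf_le_left
    exact (Ultrafilter.of_le F) (h1 hs)
  · intro r hr
    have h1 : F ≤ 𝓟 {n | d n ≤ r} := by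
      refine inf_le_right.trans ?_
      exact iInf_le (fun r : {r : ℝ // 0 < r} => 𝓟 {n | d n ≤ r.1}) ⟨r, hr⟩
    exact (Ultrafilter.of_le F) (h1 (mem_principal_self _))

end Aux

/-- Let `X` be a separable infinite-dimensional uniformly smooth real Banach space and
let `(B(x_n, R_n))` be a countable collection of closed balls with `R_n → ∞`. If the
collection is not locally finite (some point is singular for it, i.e. each of its
neighborhoods meets infinitely many balls), then it is not point-finite (some point of
`X` lies in infinitely many of the balls). -/
theorem not_locallyFinite_implies_not_pointFinite
    (X : Type*) [NormedAddCommGroup X] [NormedSpace ℝ X] [CompleteSpace X]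
    [TopologicalSpace.SeparableSpace X] (hinf : ¬ FiniteDimensional ℝ X)
    (hsmooth : UniformlySmooth X)
    (x : ℕ → X) (R : ℕ → ℝ) (hR : Tendsto R atTop atTop)
    (hnlf : ∃ p : X, ∀ U ∈ nhds p, {n | (closedBall (x n) (R n) ∩ U).Nonempty}.Infinite) :
    ∃ p : X, {n | p ∈ closedBall (x n) (R n)}.Infinite := by
  classical
  obtain ⟨p, hp⟩ := hnlf
  set v : ℕ → X := fun n => x n - p with hv
  set d : ℕ → ℝ := fun n => ‖v n‖ - R n with hd
  have hdist : ∀ n, dist p (x n) = ‖v n‖ := by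
    intro n; rw [dist_comm, dist_eq_norm]
  have hinfset : ∀ r > (0:ℝ), {n | d n ≤ r}.Infinite := by
    intro r hr
    refine (hp (closedBall p r) (closedBall_mem_nhds p hr)).mono ?_
    rintro n ⟨z, hz1, hz2⟩
    rw [mem_closedBall] at hz1 hz2
    simp only [mem_setOf_eq, hd]
    have h2 : ‖v n‖ ≤ r + R n := by
      rw [← hdist n]
      calc dist p (x n) ≤ dist p z + dist z (x n) := dist_triangle _ _ _
      _ ≤ r + R n := by rw [dist_comm p z]; exact add_le_add hz2 hz1
    linarith
  by_cases hA : {n | d n ≤ 0}.Infinite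
  · refine ⟨p, hA.mono ?_⟩
    intro n hn
    simp only [mem_setOf_eq, hd] at hn ⊢
    rw [mem_closedBall, hdist n]
    linarith
  · rw [Set.not_infinite] at hA
    -- nontrivial X
    haveI hnt : Nontrivial X := by
      by_contra hns
      rw [not_nontrivial_iff_subsingleton] at hns
      exact hinf inferInstance
    obtain ⟨z0, hz0⟩ := exists_ne (0 : X)
    obtain ⟨e, he1, -⟩ := exists_dual_vector ℝ z0 (norm_ne_zero_iff.2 hz0)
    -- norming functionals
    have hfnex : ∀ n, ∃ gg : X →L[ℝ] ℝ, ‖gg‖ = 1 ∧ (v n ≠ 0 → gg (v n) = ‖v n‖) := by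
      intro n
      by_cases h : v n = 0
      · exact ⟨e, he1, fun h' => absurd h h'⟩
      · obtain ⟨gg, hg1, hg2⟩ := exists_dual_vector ℝ (v n) (norm_ne_zero_iff.2 h)
        exact ⟨gg, hg1, fun _ => by exact_mod_cast hg2⟩
    choose fn hfn1 hfn2 using hfnex
    -- the ultrafilter
    obtain ⟨U, hUtop, hUd⟩ := aux_buildU d hinfset
    haveI : NeBot (U : Filter ℕ) := U.neBot
    have hUR : ∀ M : ℝ, {n | M ≤ R n} ∈ U := fun M => hUtop _ (hR.eventually_ge_atTop M)
    have hUpos : {n | 0 < d n} ∈ U := by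
      refine hUtop _ ?_
      rw [← Nat.cofinite_eq_atTop, mem_cofinite]
      convert hA using 1
      ext n; simp [not_lt]
    -- weak* limit
    obtain ⟨f, hfle, hfw⟩ := aux_ulim_dual U fn zero_le_one (fun n => (hfn1 n).le)
    set g : ℕ → X →L[ℝ] ℝ := fun n => fn n - f with hg
    have hgw : ∀ w : X, Tendsto (fun n => g n w) U (𝓝 0) := by
      intro w
      have := (hfw w).sub (tendsto_const_nhds (x := f w))
      simpa [hg] using this
    have hgbd : ∀ n, ‖g n‖ ≤ 2 := by
      intro n
      calc ‖fn n - f‖ ≤ ‖fn n‖ + ‖f‖ := norm_sub_le _ _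
      _ ≤ 1 + 1 := by rw [hfn1 n]; linarith
      _ = 2 := by norm_num
    obtain ⟨s, -, hsT⟩ := aux_ulim_real U (u := fun n => ‖g n‖) (C := 2)
      (fun n => by rw [abs_of_nonneg (norm_nonneg _)]; exact hgbd n)
    have hs0 : 0 ≤ s := le_of_tendsto_of_tendsto' tendsto_const_nhds hsT (fun n => norm_nonneg _)
    -- ball membership criterion
    have hball : ∀ (ε δ : ℝ), 0 < ε → 0 < δ →
        (∀ x' y' : X, x' ≠ 0 → ‖y'‖ ≤ δ * ‖x'‖ → ‖x' + y'‖ + ‖x' - y'‖ ≤ 2 * ‖x'‖ + ε * ‖y'‖) →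
        ∀ n (y : X), 0 < d n → 1 ≤ δ * R n → ‖y‖ ≤ 1 → d n + ε * ‖y‖ ≤ fn n y →
        p + y ∈ closedBall (x n) (R n) := by
      intro ε δ hε hδ hs3 n y hdn hδR hy hfny
      have hRpos : 0 < R n := by nlinarith
      have hdn' : ‖v n‖ - R n > 0 := by simpa [hd] using hdn
      have hvn : R n < ‖v n‖ := by linarith
      have hv0 : v n ≠ 0 := by
        intro h0; rw [h0, norm_zero] at hvn; linarith
      have hyv : ‖y‖ ≤ δ * ‖v n‖ := by
        calc ‖y‖ ≤ 1 := hy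
        _ ≤ δ * R n := hδR
        _ ≤ δ * ‖v n‖ := by nlinarith
      have hsm := hs3 (v n) y hv0 hyv
      have hnorm : ‖v n‖ + fn n y ≤ ‖v n + y‖ := by
        have hnv := hfn2 n hv0
        have h1 : fn n (v n + y) = ‖v n‖ + fn n y := by rw [map_add, hnv]
        have h2 : fn n (v n + y) ≤ |fn n (v n + y)| := le_abs_self _
        have h3 : |fn n (v n + y)| ≤ ‖fn n‖ * ‖v n + y‖ := (fn n).le_opNorm _
        rw [hfn1 n, one_mul] at h3
        linarith
      rw [mem_closedBall, dist_eq_norm]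
      have hrw : p + y - x n = -(v n - y) := by simp [hv]; abel
      rw [hrw, norm_neg]
      have hfny' : (‖v n‖ - R n) + ε * ‖y‖ ≤ fn n y := by simpa [hd] using hfny
      linarith
    rcases hs0.eq_or_lt with hse | hsp
    · -- case s = 0
      obtain ⟨δ₀, hδ₀, hsm₀⟩ := aux_smooth_scaled hsmooth (show (0:ℝ) < 1/8 by norm_num)
      have hfbig : (15/16:ℝ) < ‖f‖ := by
        have hev : ∀ᶠ n in (U : Filter ℕ), ‖g n‖ < 1/16 :=
          hsT.eventually_lt_const (by rw [← hse]; norm_num)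
        obtain ⟨n, hn⟩ := hev.exists
        have h1 : ‖fn n‖ - ‖f‖ ≤ ‖fn n - f‖ := norm_sub_norm_le _ _
        rw [hfn1 n] at h1
        have h2 : ‖fn n - f‖ = ‖g n‖ := by rw [hg]
        rw [h2] at h1
        linarith
      obtain ⟨y₀, hy₀, hfy₀⟩ := aux_exists_unit_lt f (by norm_num : (0:ℝ) ≤ 3/4) (by linarith)
      refine ⟨p + y₀, ?_⟩
      apply Set.infinite_of_not_bddAbove
      rintro ⟨b, hb⟩
      have hUg : {n | ‖g n‖ ≤ 1/8} ∈ U := by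
        have := hsT.eventually_lt_const (show s < 1/8 by rw [← hse]; norm_num)
        filter_upwards [this] with n hn using hn.le
      have hS : {n | (b+1 ≤ n) ∧ d n ≤ 1/8 ∧ ‖g n‖ ≤ 1/8 ∧ 1/δ₀ ≤ R n ∧ 0 < d n} ∈ U := by
        have hA1 : {n | b+1 ≤ n} ∈ U := hUtop _ (eventually_ge_atTop (b+1))
        have hA2 : {n | d n ≤ 1/8} ∈ U := hUd (1/8) (by norm_num)
        have hA4 : {n | 1/δ₀ ≤ R n} ∈ U := hUR (1/δ₀)
        filter_upwards [hA1, hA2, hUg, hA4, hUpos] with n h1 h2 h3 h4 h5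
        exact ⟨h1, h2, h3, h4, h5⟩
      obtain ⟨n, hn1, hn2, hn3, hn4, hn5⟩ := Filter.nonempty_of_mem hS
      have hmem : p + y₀ ∈ closedBall (x n) (R n) := by
        refine hball (1/8) δ₀ (by norm_num) hδ₀ hsm₀ n y₀ hn5 ?_ hy₀ ?_
        · rw [div_le_iff₀ hδ₀] at hn4
          nlinarith
        · have hgy : |g n y₀| ≤ 1/8 := by
            have := (g n).le_opNorm y₀
            rw [Real.norm_eq_abs] at this
            nlinarith [norm_nonneg (g n), norm_nonneg y₀]
          have hfeq : fn n y₀ = f y₀ + g n y₀ := by simp [hg]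
          have hgy' := (abs_le.1 hgy).1
          rw [hfeq]
          nlinarith [norm_nonneg y₀]
      have : n ≤ b := hb hmem
      omega
    · -- case s > 0
      have hδe : ∀ j : ℕ, ∃ δ > 0, ∀ x' y' : X, x' ≠ 0 → ‖y'‖ ≤ δ * ‖x'‖ →
          ‖x' + y'‖ + ‖x' - y'‖ ≤ 2 * ‖x'‖ + ((1/2:ℝ)^(j+1) * (s/32)) * ‖y'‖ := fun j =>
        aux_smooth_scaled hsmooth (by positivity)
      choose δj hδj1 hδj2 using hδe
      set Ψ : (L : List (ℕ × X)) → Fin (L.length+1) → (X →L[ℝ] ℝ) :=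
        fun L => Fin.cons f (fun i => fn ((L.get i).1)) with hΨ
      set YL : List (ℕ × X) → Submodule ℝ X := fun L => ⨅ i, LinearMap.ker (Ψ L i : X →ₗ[ℝ] ℝ) with hYL
      have hYLmem : ∀ (L) (z : X), z ∈ YL L ↔ ∀ i, Ψ L i z = 0 := by
        intro L z
        simp only [hYL, Submodule.mem_iInf, LinearMap.mem_ker, ContinuousLinearMap.coe_coe]
      have key : ∀ L : List (ℕ × X), ∃ q : ℕ × X,
          (∀ a ∈ L, a.1 < q.1) ∧ 0 < d q.1 ∧ d q.1 ≤ (1/2:ℝ)^(L.length+1) * (s/32) ∧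
          1 ≤ δj L.length * R q.1 ∧
          (∀ a ∈ L, |g q.1 a.2| ≤ (1/4:ℝ)^(L.length+1) * (s/16)) ∧
          q.2 ∈ YL L ∧ ‖q.2‖ ≤ 1 ∧ s/4 ≤ g q.1 q.2 := by
        intro L
        obtain ⟨t, hts, htend⟩ :=
          aux_claimA U g (by norm_num) hgbd hgw hsT (Ψ L) (YL L) (hYLmem L)
        have hmemS : {n | 3*s/8 < ‖(g n).comp (YL L).subtypeL‖} ∈ U :=
          htend.eventually_const_lt (by linarith)
        have hmem1 : {n | ∀ a ∈ L, a.1 < n} ∈ U :=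
          aux_listU U L _ (fun a _ => hUtop _ (eventually_gt_atTop a.1))
        have hmem2 : {n | ∀ a ∈ L, |g n a.2| ≤ (1/4:ℝ)^(L.length+1) * (s/16)} ∈ U := by
          refine aux_listU U L _ (fun a _ => ?_)
          have h0 : Tendsto (fun n => |g n a.2|) U (𝓝 0) := by
            have := (hgw a.2).abs
            simpa using this
          have hlt : ∀ᶠ n in (U : Filter ℕ), |g n a.2| < (1/4:ℝ)^(L.length+1) * (s/16) :=
            h0.eventually_lt_const (by positivity)
          filter_upwards [hlt] with n hn using hn.le
        have hmem3 : {n | 1 ≤ δj L.length * R n} ∈ U := by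
          filter_upwards [hUR (1/(δj L.length))] with n hn
          rw [div_le_iff₀ (hδj1 _)] at hn
          nlinarith
        have hmem4 : {n | d n ≤ (1/2:ℝ)^(L.length+1) * (s/32)} ∈ U := hUd _ (by positivity)
        have hbig : {n | (∀ a ∈ L, a.1 < n) ∧ 0 < d n ∧ d n ≤ (1/2:ℝ)^(L.length+1) * (s/32) ∧
            1 ≤ δj L.length * R n ∧ (∀ a ∈ L, |g n a.2| ≤ (1/4:ℝ)^(L.length+1) * (s/16)) ∧
            3*s/8 < ‖(g n).comp (YL L).subtypeL‖} ∈ U := by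
          filter_upwards [hmemS, hmem1, hmem2, hmem3, hmem4, hUpos] with n h1 h2 h3 h4 h5 h6
          exact ⟨h2, h6, h5, h4, h3, h1⟩
        obtain ⟨n, hn1, hn2, hn3, hn4, hn5, hn6⟩ := Filter.nonempty_of_mem hbig
        obtain ⟨z, hz1, hz2⟩ := aux_exists_unit_lt ((g n).comp (YL L).subtypeL)
          (by positivity : (0:ℝ) ≤ 3*s/8) hn6
        simp only [ContinuousLinearMap.comp_apply, Submodule.subtypeL_apply] at hz2
        exact ⟨(n, (z : X)), hn1, hn2, hn3, hn4, hn5, z.2, hz1, by linarith⟩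
      let build : ℕ → List (ℕ × X) :=
        fun j => Nat.rec [] (fun _ ih => Classical.choose (key ih) :: ih) j
      have hbuild : ∀ j, build (j+1) = Classical.choose (key (build j)) :: build j :=
        fun j => rfl
      set pj : ℕ → ℕ × X := fun j => Classical.choose (key (build j)) with hpj
      have hQj : ∀ j, (∀ a ∈ build j, a.1 < (pj j).1) ∧ 0 < d (pj j).1 ∧
          d (pj j).1 ≤ (1/2:ℝ)^((build j).length+1) * (s/32) ∧
          1 ≤ δj (build j).length * R (pj j).1 ∧
          (∀ a ∈ build j, |g (pj j).1 a.2| ≤ (1/4:ℝ)^((build j).length+1) * (s/16)) ∧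
          (pj j).2 ∈ YL (build j) ∧ ‖(pj j).2‖ ≤ 1 ∧ s/4 ≤ g (pj j).1 (pj j).2 :=
        fun j => Classical.choose_spec (key (build j))
      have hlen : ∀ j, (build j).length = j := by
        intro j
        induction j with
        | zero => rfl
        | succ j ih => rw [hbuild j, List.length_cons, ih]
      have hmemb : ∀ {i j : ℕ}, i < j → pj i ∈ build j := by
        intro i j hij
        induction j with
        | zero => omega
        | succ j ih =>
          rw [hbuild j]
          rcases Nat.lt_succ_iff_lt_or_eq.1 hij with h | h
          · exact List.mem_cons_of_mem _ (ih h)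
          · subst h
            simp only [hpj]
            exact List.mem_cons_self
      have hnmono : StrictMono (fun j => (pj j).1) := by
        apply strictMono_nat_of_lt_succ
        intro j
        exact (hQj (j+1)).1 (pj j) (hmemb (Nat.lt_succ_self j))
      -- the series
      have hgeom : Summable (fun i : ℕ => (1/2:ℝ)^(i+1)) := by
        have := (summable_geometric_of_lt_one (by norm_num : (0:ℝ) ≤ 1/2)
          (by norm_num : (1/2:ℝ) < 1)).mul_right (1/2)
        simpa [pow_succ] using this
      have htsum1 : (∑' i : ℕ, (1/2:ℝ)^(i+1)) = 1 := by
        have h1 : (fun i : ℕ => (1/2:ℝ)^(i+1)) = fun i : ℕ => (1/2:ℝ)^i * (1/2) := by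
          ext i; rw [pow_succ]
        rw [h1, tsum_mul_right, tsum_geometric_of_lt_one (by norm_num) (by norm_num)]
        norm_num
      have hyjle : ∀ i, ‖(pj i).2‖ ≤ 1 := fun i => (hQj i).2.2.2.2.2.2.1
      have hnormb : ∀ i, ‖(1/2:ℝ)^(i+1) • (pj i).2‖ ≤ (1/2:ℝ)^(i+1) := by
        intro i
        rw [norm_smul, Real.norm_eq_abs, abs_of_nonneg (by positivity)]
        nlinarith [hyjle i, pow_pos (show (0:ℝ) < 1/2 by norm_num) (i+1)]
      have hnsum : Summable (fun i => ‖(1/2:ℝ)^(i+1) • (pj i).2‖) :=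
        Summable.of_nonneg_of_le (fun i => norm_nonneg _) hnormb hgeom
      have hsum : Summable (fun i => (1/2:ℝ)^(i+1) • (pj i).2) := hnsum.of_norm
      set y : X := ∑' i, (1/2:ℝ)^(i+1) • (pj i).2 with hy
      have hynorm : ‖y‖ ≤ 1 := by
        calc ‖y‖ ≤ ∑' i, ‖(1/2:ℝ)^(i+1) • (pj i).2‖ := norm_tsum_le_tsum_norm hnsum
        _ ≤ ∑' i : ℕ, (1/2:ℝ)^(i+1) := Summable.tsum_le_tsum hnormb hnsum hgeom
        _ = 1 := htsum1
      -- kernel facts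
      have hker_f : ∀ i, f ((pj i).2) = 0 := by
        intro i
        have hm := (hQj i).2.2.2.2.2.1
        rw [hYLmem] at hm
        have h0 := hm 0
        simpa [hΨ] using h0
      have hker_fn : ∀ i j, j < i → fn ((pj j).1) ((pj i).2) = 0 := by
        intro i j hji
        have hm := (hQj i).2.2.2.2.2.1
        rw [hYLmem] at hm
        obtain ⟨idx, hidx⟩ := List.get_of_mem (hmemb hji)
        have h0 := hm idx.succ
        simp only [hΨ, Fin.cons_succ] at h0
        rw [hidx] at h0
        exact h0
      have hker_g : ∀ i j, j < i → g ((pj j).1) ((pj i).2) = 0 := by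
        intro i j hji
        have h1 := hker_fn i j hji
        have h2 := hker_f i
        simp [hg, h1, h2]
      -- membership for each j
      have hy_in : ∀ j, p + y ∈ closedBall (x ((pj j).1)) (R ((pj j).1)) := by
        intro j
        obtain ⟨hq1, hq2, hq3, hq4, hq5, hq6, hq7, hq8⟩ := hQj j
        rw [hlen j] at hq3 hq4 hq5
        have hterm : ∀ i, fn ((pj j).1) ((pj i).2) = f ((pj i).2) + g ((pj j).1) ((pj i).2) := by
          intro i; simp [hg]
        have happ : fn ((pj j).1) y = ∑' i, (1/2:ℝ)^(i+1) * (fn ((pj j).1) ((pj i).2)) := by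
          calc fn ((pj j).1) y = ∑' i, fn ((pj j).1) ((1/2:ℝ)^(i+1) • (pj i).2) := by
                rw [hy]; exact (fn ((pj j).1)).map_tsum hsum
          _ = ∑' i, (1/2:ℝ)^(i+1) * (fn ((pj j).1) ((pj i).2)) :=
                tsum_congr (fun i => by rw [map_smul]; rfl)
        have hzero : ∀ i ∉ Finset.range (j+1), (1/2:ℝ)^(i+1) * (fn ((pj j).1) ((pj i).2)) = 0 := by
          intro i hi
          have hji : j < i := by
            simp only [Finset.mem_range] at hi
            omega
          rw [hterm i, hker_f i, hker_g i j hji]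
          ring
        have heq : fn ((pj j).1) y =
            ∑ i ∈ Finset.range (j+1), (1/2:ℝ)^(i+1) * (fn ((pj j).1) ((pj i).2)) := by
          rw [happ]
          exact tsum_eq_sum hzero
        have hpow1 : (0:ℝ) < (1/2:ℝ)^(j+1) := by positivity
        have hsum_small : -((1/4:ℝ)^(j+1) * (s/16)) ≤
            ∑ i ∈ Finset.range j, (1/2:ℝ)^(i+1) * (fn ((pj j).1) ((pj i).2)) := by
          have hlb : ∀ i ∈ Finset.range j, -((1/4:ℝ)^(j+1) * (s/16)) * ((1/2:ℝ)^(i+1)) ≤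
              (1/2:ℝ)^(i+1) * (fn ((pj j).1) ((pj i).2)) := by
            intro i hi
            have hji : i < j := Finset.mem_range.1 hi
            have hb := hq5 (pj i) (hmemb hji)
            have hb1 := (abs_le.1 hb).1
            have hfi : fn ((pj j).1) ((pj i).2) = g ((pj j).1) ((pj i).2) := by
              rw [hterm i, hker_f i]; ring
            rw [hfi]
            have hpi : (0:ℝ) < (1/2:ℝ)^(i+1) := by positivity
            nlinarith [hb1, hpi]
          have h2 := Finset.sum_le_sum hlb
          rw [← Finset.mul_sum] at h2
          have h3 : ∑ i ∈ Finset.range j, (1/2:ℝ)^(i+1) ≤ 1 := by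
            calc ∑ i ∈ Finset.range j, (1/2:ℝ)^(i+1) ≤ ∑' i : ℕ, (1/2:ℝ)^(i+1) :=
                  Summable.sum_le_tsum _ (fun i _ => by positivity) hgeom
            _ = 1 := htsum1
          have h4 : (0:ℝ) ≤ ∑ i ∈ Finset.range j, (1/2:ℝ)^(i+1) :=
            Finset.sum_nonneg (fun i _ => by positivity)
          have hc0 : (0:ℝ) ≤ (1/4:ℝ)^(j+1) * (s/16) := by positivity
          nlinarith [h2, h3, h4, hc0]
        have hj_big : (1/2:ℝ)^(j+1) * (s/4) ≤ (1/2:ℝ)^(j+1) * (fn ((pj j).1) ((pj j).2)) := by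
          have hfi : fn ((pj j).1) ((pj j).2) = g ((pj j).1) ((pj j).2) := by
            rw [hterm j, hker_f j]; ring
          rw [hfi]
          nlinarith [hq8, hpow1]
        have hfn_y : (1/2:ℝ)^(j+1) * (s/4) - (1/4:ℝ)^(j+1) * (s/16) ≤ fn ((pj j).1) y := by
          rw [heq, Finset.sum_range_succ]
          linarith [hsum_small, hj_big]
        have hpow2 : (1/4:ℝ)^(j+1) = ((1/2:ℝ)^(j+1))^2 := by
          rw [show (1/4:ℝ) = (1/2)^2 by norm_num, ← pow_mul, ← pow_mul, Nat.mul_comm]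
        have hpow3 : (1/2:ℝ)^(j+1) ≤ 1/2 := by
          calc (1/2:ℝ)^(j+1) ≤ (1/2:ℝ)^1 :=
                pow_le_pow_of_le_one (by norm_num) (by norm_num) (by omega)
          _ = 1/2 := pow_one _
        refine hball ((1/2:ℝ)^(j+1) * (s/32)) (δj j) (by positivity) (hδj1 j) (hδj2 j)
          ((pj j).1) y hq2 hq4 hynorm ?_
        have hεy : (1/2:ℝ)^(j+1) * (s/32) * ‖y‖ ≤ (1/2:ℝ)^(j+1) * (s/32) := by
          have h := mul_le_mul_of_nonneg_left hynorm
            (show (0:ℝ) ≤ (1/2:ℝ)^(j+1) * (s/32) by positivity)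
          rw [mul_one] at h
          linarith
        have hquad : (1/4:ℝ)^(j+1) * (s/16) ≤ (1/2:ℝ)^(j+1) * (s/32) := by
          rw [hpow2]
          nlinarith [mul_nonneg (mul_nonneg (sub_nonneg.2 hpow3) hpow1.le) hsp.le]
        nlinarith [hfn_y, hq3, hεy, hquad, hpow1, hsp]
      refine ⟨p + y, Set.infinite_of_injective_forall_mem hnmono.injective ?_⟩
      intro j
      exact hy_in j
end

section
/- Let X be a uniformly rotund (uniformly convex) real Banach space, let b > 0 and x_0 ∈ X, and let (B_n)_{n=1}^∞ with B_n = B(x_n, R_n) be a sequence of closed balls in X such that R_n > b and x_0 ∉ int B_n for every n. Set F_n = conv(B_n \ int B(x_0, b)) (the closed convex hull of the part of B_n outside the open ball of center x_0 and radius b). If dist(x_0, F_n) → 0 as n → ∞, then R_n → ∞ as n → ∞. -/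
open Metric Set Filter

/-- Let `X` be a uniformly convex real Banach space, `b > 0`, and `(B(x_n, R_n))` a
sequence of closed balls with `R_n > b` and `x₀ ∉ int B(x_n, R_n)` for every `n`. Set
`F_n = conv(B(x_n, R_n) \ int B(x₀, b))` (closed convex hull). If
`dist(x₀, F_n) → 0`, then `R_n → ∞`. -/
theorem radii_tendsto_atTop
    (X : Type*) [NormedAddCommGroup X] [NormedSpace ℝ X] [UniformConvexSpace X]
    (b : ℝ) (hb : 0 < b) (x₀ : X) (x : ℕ → X) (R : ℕ → ℝ)
    (hRb : ∀ n, b < R n)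
    (hx₀ : ∀ n, x₀ ∉ interior (closedBall (x n) (R n)))
    (hdist : Tendsto
      (fun n => infDist x₀
        (closedConvexHull ℝ (closedBall (x n) (R n) \ ball x₀ b)))
      atTop (nhds 0)) :
    Tendsto R atTop atTop := by
  rw [Filter.tendsto_atTop]
  intro M
  set M₀ : ℝ := max M b + 1 with hM₀
  have hbM : b ≤ max M b := le_max_right M b
  have hM₀pos : 0 < M₀ := by linarith
  have hε : (0:ℝ) < b / (2 * M₀) := by positivity
  obtain ⟨δ', hδ', hUC⟩ := exists_forall_closed_ball_dist_add_le_two_sub X hε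
  set δ : ℝ := min (b * δ' / 2) (b / 4) with hδdef
  have hδpos : 0 < δ := lt_min (by positivity) (by positivity)
  have hδb4 : δ ≤ b / 4 := min_le_right _ _
  have hδb : δ / b ≤ δ' / 2 := by
    rw [div_le_div_iff₀ hb (by norm_num : (0:ℝ) < 2)]
    have := min_le_left (b * δ' / 2) (b / 4)
    calc δ * 2 ≤ (b * δ' / 2) * 2 := by linarith
    _ = δ' * b := by ring
  filter_upwards [hdist.eventually (gt_mem_nhds hδpos)] with n hn
  by_contra hRM
  push_neg at hRM
  have hRM₀ : R n ≤ M₀ := by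
    have : (M:ℝ) ≤ max M b := le_max_left M b
    linarith
  set c := x n with hc
  set Rn := R n with hRn
  have hRnb : b < Rn := hRb n
  have hRnpos : 0 < Rn := hb.trans hRnb
  -- distance from x₀ to the center is at least Rn
  have hD : Rn ≤ ‖c - x₀‖ := by
    have h1 := hx₀ n
    rw [interior_closedBall c (ne_of_gt hRnpos)] at h1
    rw [mem_ball, dist_eq_norm] at h1
    push_neg at h1
    rwa [← norm_sub_rev]
  have hDpos : 0 < ‖c - x₀‖ := hRnpos.trans_le hD
  have hcx₀ : c - x₀ ≠ 0 := by
    intro h; rw [h, norm_zero] at hDpos; exact lt_irrefl _ hDpos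
  set D := ‖c - x₀‖ with hDdef
  -- the generating set is nonempty
  set S := closedBall c Rn \ ball x₀ b with hS
  have hz₀S : c + (Rn / D) • (c - x₀) ∈ S := by
    constructor
    · rw [mem_closedBall, dist_eq_norm]
      have : c + (Rn / D) • (c - x₀) - c = (Rn / D) • (c - x₀) := by abel
      rw [this, norm_smul, Real.norm_eq_abs, abs_of_pos (by positivity), div_mul_cancel₀]
      exact ne_of_gt hDpos
    · rw [mem_ball, dist_eq_norm]
      push_neg
      have heq : c + (Rn / D) • (c - x₀) - x₀ = (1 + Rn / D) • (c - x₀) := by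
        rw [add_smul, one_smul]; abel
      rw [heq, norm_smul, Real.norm_eq_abs,
        abs_of_pos (by positivity : (0:ℝ) < 1 + Rn / D)]
      have : (1 + Rn / D) * D = D + Rn := by field_simp
      rw [this]
      linarith
  have hSne : (closedConvexHull ℝ S).Nonempty :=
    ⟨_, subset_closedConvexHull hz₀S⟩
  -- get a point of the hull close to x₀
  obtain ⟨y, hyF, hyd⟩ := (infDist_lt_iff hSne).mp hn
  -- the hull is inside the closed ball, giving an upper bound on D
  have hFsub : closedConvexHull ℝ S ⊆ closedBall c Rn :=
    closedConvexHull_min (diff_subset) (convex_closedBall c Rn) isClosed_closedBall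
  have hDle : D ≤ Rn + δ := by
    have h1 : dist c y ≤ Rn := mem_closedBall'.mp (hFsub hyF)
    calc D = ‖c - x₀‖ := rfl
    _ ≤ ‖c - y‖ + ‖y - x₀‖ := by
        have : c - x₀ = (c - y) + (y - x₀) := by abel
        rw [this]; exact norm_add_le _ _
    _ ≤ Rn + δ := by
        have h2 : ‖c - y‖ = dist c y := (dist_eq_norm c y).symm
        have h3 : ‖y - x₀‖ = dist x₀ y := by rw [dist_eq_norm, norm_sub_rev]
        rw [h2, h3]; exact add_le_add h1 (le_of_lt hyd)
  -- norming functional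
  obtain ⟨f, hf1, hfx⟩ := exists_dual_vector ℝ (c - x₀) (norm_ne_zero_iff.mpr hcx₀)
  replace hfx : f (c - x₀) = ‖c - x₀‖ := hfx
  -- key claim: f is ≥ f x₀ + δ on S
  have hkey : ∀ z ∈ S, f x₀ + δ ≤ f z := by
    intro z hz
    by_contra hfz
    push_neg at hfz
    have hfzx : f (z - x₀) < δ := by rw [map_sub]; linarith
    have hbz : b ≤ ‖z - x₀‖ := by
      have := hz.2
      rw [mem_ball, dist_eq_norm] at this
      push_neg at this
      exact this
    have hzc : ‖c - z‖ ≤ Rn := by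
      have := hz.1
      rw [mem_closedBall, dist_eq_norm, norm_sub_rev] at this
      exact this
    set u := D⁻¹ • (c - x₀) with hu
    set w := Rn⁻¹ • (c - z) with hw
    have hunorm : ‖u‖ = 1 := by
      rw [hu, norm_smul, Real.norm_eq_abs, abs_of_pos (by positivity)]
      field_simp
      exact hDdef.symm
    have hwnorm : ‖w‖ ≤ 1 := by
      rw [hw, norm_smul, Real.norm_eq_abs, abs_of_pos (by positivity)]
      rw [inv_mul_le_iff₀ hRnpos]
      linarith
    have hfu : f u = 1 := by
      rw [hu, map_smul, smul_eq_mul, hfx]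
      field_simp
      exact hDdef.symm
    have hfw : 1 - δ / Rn ≤ f w := by
      rw [hw, map_smul, smul_eq_mul]
      have h1 : f (c - z) = f (c - x₀) - f (z - x₀) := by
        rw [← map_sub]; congr 1; abel
      rw [h1, hfx]
      have h2 : Rn - δ ≤ ‖c - x₀‖ - f (z - x₀) := by
        have : Rn ≤ ‖c - x₀‖ := hD
        linarith
      have h3 : Rn⁻¹ * (Rn - δ) ≤ Rn⁻¹ * (‖c - x₀‖ - f (z - x₀)) :=
        mul_le_mul_of_nonneg_left h2 (inv_nonneg.mpr hRnpos.le)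
      have h4 : Rn⁻¹ * (Rn - δ) = 1 - δ / Rn := by field_simp
      linarith
    have hsum : 2 - δ' < ‖u + w‖ := by
      have h1 : f (u + w) ≤ ‖f (u + w)‖ := le_abs_self _
      have h2 : ‖f (u + w)‖ ≤ ‖f‖ * ‖u + w‖ := f.le_opNorm _
      rw [hf1, one_mul] at h2
      have h3 : f (u + w) = f u + f w := map_add f u w
      have hδRn : δ / Rn ≤ δ / b := by
        apply div_le_div_of_nonneg_left (le_of_lt hδpos) hb hRnb.le
      have : 2 - δ' / 2 ≤ f (u + w) := by rw [h3, hfu]; linarith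
      have hδ'2 : 2 - δ' < 2 - δ' / 2 := by linarith
      linarith
    have hdiff : ‖u - w‖ < b / (2 * M₀) := by
      by_contra hge
      push_neg at hge
      have := hUC (le_of_eq hunorm) hwnorm hge
      linarith
    -- now estimate ‖z - x₀‖
    have hDu : D • u = c - x₀ := by
      rw [hu, smul_smul, mul_inv_cancel₀ (ne_of_gt hDpos), one_smul]
    have hRw : Rn • w = c - z := by
      rw [hw, smul_smul, mul_inv_cancel₀ (ne_of_gt hRnpos), one_smul]
    have hzx : z - x₀ = Rn • (u - w) + (D - Rn) • u := by
      rw [smul_sub, sub_smul, hDu, hRw]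
      abel
    have hest : ‖z - x₀‖ < b := by
      rw [hzx]
      calc ‖Rn • (u - w) + (D - Rn) • u‖ ≤ ‖Rn • (u - w)‖ + ‖(D - Rn) • u‖ :=
            norm_add_le _ _
      _ = Rn * ‖u - w‖ + |D - Rn| * ‖u‖ := by
            rw [norm_smul, norm_smul, Real.norm_eq_abs, Real.norm_eq_abs,
              abs_of_pos hRnpos]
      _ ≤ M₀ * ‖u - w‖ + δ := by
            rw [hunorm, mul_one, abs_of_nonneg (by linarith : (0:ℝ) ≤ D - Rn)]
            have : Rn * ‖u - w‖ ≤ M₀ * ‖u - w‖ :=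
              mul_le_mul_of_nonneg_right hRM₀ (norm_nonneg _)
            linarith
      _ < M₀ * (b / (2 * M₀)) + δ := by
            have := mul_lt_mul_of_pos_left hdiff hM₀pos
            linarith
      _ = b / 2 + δ := by field_simp
      _ < b := by linarith
    linarith
  -- the hull is in the halfspace {w | f x₀ + δ ≤ f w}
  have hhalf : closedConvexHull ℝ S ⊆ {w : X | f x₀ + δ ≤ f w} := by
    apply closedConvexHull_min hkey
    · exact convex_halfSpace_ge (f := (f : X →ₗ[ℝ] ℝ)) (LinearMap.isLinear _) _
    · exact isClosed_le continuous_const f.continuous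
  have hy2 : f x₀ + δ ≤ f y := hhalf hyF
  have hy3 : f y - f x₀ < δ := by
    have h1 : f (y - x₀) ≤ ‖f (y - x₀)‖ := le_abs_self _
    have h2 : ‖f (y - x₀)‖ ≤ ‖f‖ * ‖y - x₀‖ := f.le_opNorm _
    rw [hf1, one_mul] at h2
    have h3 : ‖y - x₀‖ < δ := by rwa [← norm_sub_rev, ← dist_eq_norm]
    have h4 : f (y - x₀) = f y - f x₀ := map_sub f y x₀
    linarith
  linarith
end
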